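/- arXiv:1410.6960 — 2 statements merged into one kernel-verified Lean document; each statement's English description precedes it below -/
import Mathlib

section
/- Let ⟨X, Y, I⟩ be an L-context and Σ a set of FAIs in Y. The following are equivalent: (1) Σ is S-complete in ⟨X, Y, I⟩; (2) Mod^S(Σ) = {M ∈ L^Y : M = M^{↓↑}}; (3) [M]^S_Σ = M^{↓↑} for all M ∈ L^Y. -/
/-- A complete residuated lattice: a complete lattice with a commutative, associative
multiplication whose neutral element is the top element and which distributes over
arbitrary suprema. -/
class CompleteResiduatedLattice (L : Type*) extends CompleteLattice L, CommMonoid L where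
  mul_sSup : ∀ (a : L) (s : Set L), a * sSup s = ⨆ b ∈ s, a * b
  one_eq_top : (1 : L) = ⊤

namespace FAIparam

variable {L : Type*} {Y : Type*} {X : Type*}

/-- A fuzzy attribute implication (FAI): a pair (antecedent, consequent) of L-sets in Y. -/
abbrev FAI (L Y : Type*) := (Y → L) × (Y → L)

/-- A pair of operators on L-sets in Y. -/
abbrev OpPair (L Y : Type*) := ((Y → L) → (Y → L)) × ((Y → L) → (Y → L))

/-- S is a parameterization: every pair in S is a monotone Galois connection, the identity
pair belongs to S, and S is closed under composition ⟨f₁,g₁⟩∘⟨f₂,g₂⟩ = ⟨f₁∘f₂, g₂∘g₁⟩. -/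
def IsParam [CompleteResiduatedLattice L] (S : Set (OpPair L Y)) : Prop :=
  (∀ p ∈ S, ∀ A B : Y → L, p.1 A ≤ B ↔ A ≤ p.2 B) ∧
  (((id, id) : OpPair L Y) ∈ S) ∧
  (∀ p ∈ S, ∀ q ∈ S, ((p.1 ∘ q.1, q.2 ∘ p.2) : OpPair L Y) ∈ S)

/-- M ⊨^S A ⇒ B : for every ⟨f,g⟩ ∈ S, f(A) ⊆ M implies f(B) ⊆ M. -/
def Sat [CompleteResiduatedLattice L] (S : Set (OpPair L Y)) (M : Y → L) (φ : FAI L Y) : Prop :=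
  ∀ p ∈ S, p.1 φ.1 ≤ M → p.1 φ.2 ≤ M

/-- The set Mod^S(Th) of S-models of a theory Th. -/
def ModS [CompleteResiduatedLattice L] (S : Set (OpPair L Y)) (Th : Set (FAI L Y)) :
    Set (Y → L) :=
  {M | ∀ φ ∈ Th, Sat S M φ}

/-- Semantic entailment Th ⊨^S φ, i.e. Mod^S(Th) ⊆ Mod^S({φ}). -/
def Entails [CompleteResiduatedLattice L] (S : Set (OpPair L Y)) (Th : Set (FAI L Y))
    (φ : FAI L Y) : Prop :=
  ModS S Th ⊆ ModS S {φ}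

/-- [A]^S_Th : the least S-model of Th containing A (intersection of all such models). -/
def clS [CompleteResiduatedLattice L] (S : Set (OpPair L Y)) (Th : Set (FAI L Y))
    (A : Y → L) : Y → L :=
  sInf {M | M ∈ ModS S Th ∧ A ≤ M}

/-- S-closure operator on L^Y. -/
def IsSClosureOp [CompleteResiduatedLattice L] (S : Set (OpPair L Y))
    (c : (Y → L) → (Y → L)) : Prop :=
  (∀ A, A ≤ c A) ∧ (∀ A B, A ≤ B → c A ≤ c B) ∧
  (∀ p ∈ S, ∀ A, c (p.2 (c A)) ≤ p.2 (c A))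

/-- S-closure system in ⟨L^Y, ⊆⟩. -/
def IsSClosureSys [CompleteResiduatedLattice L] (S : Set (OpPair L Y))
    (𝒮 : Set (Y → L)) : Prop :=
  (∀ T ⊆ 𝒮, sInf T ∈ 𝒮) ∧ (∀ p ∈ S, ∀ M ∈ 𝒮, p.2 M ∈ 𝒮)

/-- c_𝒮(A) = ⋂{B ∈ 𝒮 : A ⊆ B}. -/
def clSys [CompleteResiduatedLattice L] (𝒮 : Set (Y → L)) (A : Y → L) : Y → L :=
  sInf {B | B ∈ 𝒮 ∧ A ≤ B}

/-- I ⊨^S A ⇒ B for an L-context ⟨X,Y,I⟩ (with I curried, I x = I_x). -/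
def CtxSat [CompleteResiduatedLattice L] (S : Set (OpPair L Y)) (I : X → Y → L)
    (φ : FAI L Y) : Prop :=
  ∀ x, Sat S (I x) φ

/-- S_g : the set of upper adjoints occurring in S. -/
def Sg [CompleteResiduatedLattice L] (S : Set (OpPair L Y)) : Set ((Y → L) → (Y → L)) :=
  {g | ∃ f, (f, g) ∈ S}

/-- F^↑ = ⋂{g(I_x) : ⟨x,g⟩ ∈ F}. -/
def upOp [CompleteResiduatedLattice L] (I : X → Y → L)
    (F : Set (X × ((Y → L) → (Y → L)))) : Y → L :=
  ⨅ xg ∈ F, xg.2 (I xg.1)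

/-- G^↓ = {⟨x,g⟩ ∈ X × S_g : G ⊆ g(I_x)}. -/
def downOp [CompleteResiduatedLattice L] (S : Set (OpPair L Y)) (I : X → Y → L)
    (G : Y → L) : Set (X × ((Y → L) → (Y → L))) :=
  {xg | xg.2 ∈ Sg S ∧ G ≤ xg.2 (I xg.1)}

/-- G^{↓↑} = ⋂{g(I_x) : x ∈ X, ⟨f,g⟩ ∈ S, G ⊆ g(I_x)}. -/
def dnup [CompleteResiduatedLattice L] (S : Set (OpPair L Y)) (I : X → Y → L)
    (G : Y → L) : Y → L :=
  upOp I (downOp S I G)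

/-- Σ is S-complete in ⟨X,Y,I⟩. -/
def SComplete [CompleteResiduatedLattice L] (S : Set (OpPair L Y)) (Th : Set (FAI L Y))
    (I : X → Y → L) : Prop :=
  ∀ A B : Y → L, Entails S Th (A, B) ↔ CtxSat S I (A, B)

/-- Σ is an S-base of ⟨X,Y,I⟩. -/
def SBase [CompleteResiduatedLattice L] (S : Set (OpPair L Y)) (Th : Set (FAI L Y))
    (I : X → Y → L) : Prop :=
  SComplete S Th I ∧ ∀ Th' ⊂ Th, ¬ SComplete S Th' I

/-- S-provability: axioms A∪B ⇒ A, assumptions from Th, rule (Cut) and rule (F). -/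
inductive ProvS [CompleteResiduatedLattice L] (S : Set (OpPair L Y)) (Th : Set (FAI L Y)) :
    FAI L Y → Prop
  | ax (A B : Y → L) : ProvS S Th (A ⊔ B, A)
  | hyp {φ : FAI L Y} (h : φ ∈ Th) : ProvS S Th φ
  | cut {A B C D : Y → L} : ProvS S Th (A, B) → ProvS S Th (B ⊔ C, D) → ProvS S Th (A ⊔ C, D)
  | mul {A B : Y → L} {p : OpPair L Y} (hp : p ∈ S) : ProvS S Th (A, B) → ProvS S Th (p.1 A, p.1 B)

/-- Provability using the axioms and (Cut) as the only inference rule. -/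
inductive ProvCut [CompleteResiduatedLattice L] (Th : Set (FAI L Y)) : FAI L Y → Prop
  | ax (A B : Y → L) : ProvCut Th (A ⊔ B, A)
  | hyp {φ : FAI L Y} (h : φ ∈ Th) : ProvCut Th φ
  | cut {A B C D : Y → L} : ProvCut Th (A, B) → ProvCut Th (B ⊔ C, D) → ProvCut Th (A ⊔ C, D)

/-- Residuum a → b = ⋁{c : a ⊗ c ≤ b}. -/
def resid [CompleteResiduatedLattice L] (a b : L) : L := sSup {c | a * c ≤ b}

/-- Subsethood degree S(A,B) = ⋀_{y∈Y} (A(y) → B(y)). -/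
def subDeg [CompleteResiduatedLattice L] (A B : Y → L) : L := ⨅ y, resid (A y) (B y)

/-- c ⊗ B, pointwise. -/
def scMul [CompleteResiduatedLattice L] (c : L) (B : Y → L) : Y → L := fun y => c * B y

/-- ||A ⇒ B||^S_M = ⋁{c ∈ L : M ⊨^S A ⇒ c ⊗ B}. -/
def truthDeg [CompleteResiduatedLattice L] (S : Set (OpPair L Y)) (M A B : Y → L) : L :=
  sSup {c | Sat S M (A, scMul c B)}

/-- ||A ⇒ B||^S_Th = ⋀_{M ∈ Mod^S(Th)} ||A ⇒ B||^S_M. -/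
def entDeg [CompleteResiduatedLattice L] (S : Set (OpPair L Y)) (Th : Set (FAI L Y))
    (A B : Y → L) : L :=
  ⨅ M ∈ ModS S Th, truthDeg S M A B

/-- Immediate consequence operator t^S_Th. -/
def tOp [CompleteResiduatedLattice L] (S : Set (OpPair L Y)) (Th : Set (FAI L Y))
    (M : Y → L) : Y → L :=
  M ⊔ sSup {N | ∃ φ ∈ Th, ∃ p ∈ S, p.1 φ.1 ≤ M ∧ N = p.1 φ.2}

/-- S-pseudo-intents, defined by well-founded recursion on ⊊ (L^Y is finite). -/
noncomputable def IsPseudoIntent [CompleteResiduatedLattice L] [Finite L] [Finite Y]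
    (dn : (Y → L) → (Y → L)) : (Y → L) → Prop :=
  (wellFounded_lt (α := Y → L)).fix
    (fun P rec => P < dn P ∧ ∀ Q, ∀ h : Q < P, rec Q h → dn Q ≤ P)


section Aux

variable {S : Set (OpPair L Y)} {I : X → Y → L} {Th : Set (FAI L Y)}
variable [CompleteResiduatedLattice L]

lemma le_dnup (M : Y → L) : M ≤ dnup S I M :=
  le_iInf₂ fun _ hxg => hxg.2

lemma dnup_mono {M N : Y → L} (h : M ≤ N) : dnup S I M ≤ dnup S I N :=
  le_iInf₂ fun xg hxg => iInf₂_le xg ⟨hxg.1, h.trans hxg.2⟩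

lemma dnup_idem (M : Y → L) : dnup S I (dnup S I M) = dnup S I M :=
  le_antisymm (le_iInf₂ fun xg hxg => iInf₂_le xg ⟨hxg.1, iInf₂_le xg hxg⟩) (le_dnup _)

lemma dnup_Ix (hS : IsParam S) (x : X) : dnup S I (I x) = I x :=
  le_antisymm (iInf₂_le ((x, id) : X × ((Y → L) → (Y → L))) ⟨⟨id, hS.2.1⟩, le_rfl⟩)
    (le_dnup _)

lemma sat_comp (hS : IsParam S) {M : Y → L} {φ : FAI L Y} {p : OpPair L Y}
    (hp : p ∈ S) (hM : Sat S M φ) : Sat S (p.2 M) φ := by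
  intro q hq h
  have hr := hS.2.2 p hp q hq
  have h1 : p.1 (q.1 φ.1) ≤ M := (hS.1 p hp _ _).2 h
  have h2 := hM _ hr h1
  exact (hS.1 p hp _ _).1 h2

lemma sat_dnup (hS : IsParam S) {φ : FAI L Y} (hI : CtxSat S I φ) (M : Y → L) :
    Sat S (dnup S I M) φ := by
  intro p hp h
  refine le_iInf₂ fun xg hxg => ?_
  obtain ⟨f, hf⟩ := hxg.1
  exact sat_comp hS hf (hI xg.1) p hp (h.trans (iInf₂_le xg hxg))

lemma sInf_mem_ModS {T : Set (Y → L)} (hT : T ⊆ ModS S Th) :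
    sInf T ∈ ModS S Th := by
  intro φ hφ p hp h
  exact le_sInf fun M hM => hT hM φ hφ p hp (h.trans (sInf_le hM))

lemma clS_mem (A : Y → L) : clS S Th A ∈ ModS S Th :=
  sInf_mem_ModS fun M hM => hM.1

lemma le_clS (A : Y → L) : A ≤ clS S Th A := le_sInf fun _ hM => hM.2

lemma clS_le {A N : Y → L} (h1 : N ∈ ModS S Th) (h2 : A ≤ N) : clS S Th A ≤ N :=
  sInf_le ⟨h1, h2⟩

end Aux

/-- characterization of S-complete sets of FAIs in an L-context. -/
theorem sComplete_tfae
    {L Y X : Type*} [CompleteResiduatedLattice L] [Nonempty Y] [Nonempty X]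
    (S : Set (OpPair L Y)) (hS : IsParam S) (I : X → Y → L) (Th : Set (FAI L Y)) :
    [SComplete S Th I,
     ModS S Th = {M : Y → L | M = dnup S I M},
     ∀ M : Y → L, clS S Th M = dnup S I M].TFAE := by
  tfae_have 1 → 2 := by
    intro h
    ext M
    simp only [Set.mem_setOf_eq]
    constructor
    · intro hM
      have hctx : CtxSat S I (M, dnup S I M) := by
        intro x p hp hle
        have h1 : M ≤ p.2 (I x) := (hS.1 p hp _ _).1 hle
        have h2 : dnup S I M ≤ p.2 (I x) :=
          iInf₂_le ((x, p.2) : X × ((Y → L) → (Y → L))) ⟨⟨p.1, hp⟩, h1⟩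
        exact (hS.1 p hp _ _).2 h2
      have hent := (h M (dnup S I M)).2 hctx
      have hsat := hent hM (M, dnup S I M) rfl
      exact le_antisymm (le_dnup M) (hsat (id, id) hS.2.1 le_rfl)
    · intro hM φ hφ
      have hent : Entails S Th (φ.1, φ.2) := by
        intro N hN ψ hψ
        rw [Set.mem_singleton_iff] at hψ
        subst hψ
        exact hN φ hφ
      have hctx := (h φ.1 φ.2).1 hent
      have : Sat S (dnup S I M) (φ.1, φ.2) := sat_dnup hS hctx M
      rw [hM]
      exact this
  tfae_have 2 → 3 := by
    intro h M
    apply le_antisymm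
    · have hfix : dnup S I M ∈ ModS S Th := by
        rw [h]; exact (dnup_idem M).symm
      exact clS_le hfix (le_dnup M)
    · have h1 : clS S Th M = dnup S I (clS S Th M) := by
        have := clS_mem (S := S) (Th := Th) M
        rw [h] at this
        exact this
      calc dnup S I M ≤ dnup S I (clS S Th M) := dnup_mono (le_clS M)
        _ = clS S Th M := h1.symm
  tfae_have 3 → 2 := by
    intro h
    ext M
    simp only [Set.mem_setOf_eq]
    constructor
    · intro hM
      rw [← h M]
      exact le_antisymm (le_clS M) (clS_le hM le_rfl)
    · intro hM
      have : clS S Th M = M := (h M).trans hM.symm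
      rw [← this]
      exact clS_mem M
  tfae_have 2 → 1 := by
    intro h A B
    constructor
    · intro hent x
      have hfix : (I x) ∈ ModS S Th := by
        rw [h]; exact (dnup_Ix hS x).symm
      exact hent hfix (A, B) rfl
    · intro hctx M hM ψ hψ
      rw [Set.mem_singleton_iff] at hψ
      subst hψ
      have hMfix : M = dnup S I M := by have h2 := hM; rw [h] at h2; exact h2
      rw [hMfix]
      exact sat_dnup hS hctx M
  tfae_finish

end FAIparam
end

section
/- Let ⟨X, Y, I⟩ be an L-context and Σ a set of FAIs that is S-complete in ⟨X, Y, I⟩. Then the following are equivalent: (1) Σ is an S-base of ⟨X, Y, I⟩; (2) Σ \ {A ⇒ B} ⊭^S A ⇒ B for all A ⇒ B ∈ Σ; (3) [A]^S_{Σ \ {A ⇒ B}} ⊊ [A]^S_Σ for all A ⇒ B ∈ Σ. -/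
namespace FAIparam

variable {L : Type*} {Y : Type*} {X : Type*}

section Aux

variable {L' Y' : Type*} [CompleteResiduatedLattice L']

lemma modS_antitone {S : Set (OpPair L' Y')} {Th Th' : Set (FAI L' Y')} (h : Th' ⊆ Th) :
    ModS S Th ⊆ ModS S Th' := fun _ hM φ hφ => hM φ (h hφ)

lemma clS_mem_s10 {S : Set (OpPair L' Y')} {Th : Set (FAI L' Y')} {A : Y' → L'} :
    clS S Th A ∈ ModS S Th := by
  intro φ hφ p hp hle
  refine le_sInf fun N hN => ?_
  exact hN.1 φ hφ p hp (hle.trans (sInf_le hN))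

lemma le_clS_s10 {S : Set (OpPair L' Y')} {Th : Set (FAI L' Y')} {A : Y' → L'} :
    A ≤ clS S Th A := le_sInf fun _ hN => hN.2

lemma clS_mono {S : Set (OpPair L' Y')} {Th Th' : Set (FAI L' Y')} (h : Th' ⊆ Th)
    {A : Y' → L'} : clS S Th' A ≤ clS S Th A :=
  sInf_le_sInf fun _ hN => ⟨modS_antitone h hN.1, hN.2⟩

lemma model_g {S : Set (OpPair L' Y')} (hS : IsParam S) {Th : Set (FAI L' Y')}
    {p : OpPair L' Y'} (hp : p ∈ S) {M : Y' → L'} (hM : M ∈ ModS S Th) :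
    p.2 M ∈ ModS S Th := by
  intro φ hφ q hq hle
  have hc := hS.2.2 p hp q hq
  have h1 : (p.1 ∘ q.1) φ.1 ≤ M := (hS.1 p hp _ _).mpr hle
  have h2 : (p.1 ∘ q.1) φ.2 ≤ M := hM φ hφ _ hc h1
  exact (hS.1 p hp _ _).mp h2

lemma entails_of_mem {S : Set (OpPair L' Y')} {Th : Set (FAI L' Y')} {φ : FAI L' Y'}
    (h : φ ∈ Th) : Entails S Th φ := fun _ hM ψ hψ => by
  rcases hψ with rfl; exact hM ψ h

lemma entails_iff {S : Set (OpPair L' Y')} (hS : IsParam S) {Th : Set (FAI L' Y')}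
    {A B : Y' → L'} : Entails S Th (A, B) ↔ B ≤ clS S Th A := by
  constructor
  · intro h
    exact h clS_mem_s10 (A, B) rfl (id, id) hS.2.1 le_clS_s10
  · intro hB M hM ψ hψ p hp hle
    rcases hψ with rfl
    have hA : A ≤ p.2 M := (hS.1 p hp _ _).mp hle
    have hmod : p.2 M ∈ ModS S Th := model_g hS hp hM
    have hcl : clS S Th A ≤ p.2 M := sInf_le ⟨hmod, hA⟩
    exact (hS.1 p hp _ _).mpr (hB.trans hcl)

lemma key_iff {S : Set (OpPair L' Y')} (hS : IsParam S) {Th : Set (FAI L' Y')}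
    {φ : FAI L' Y'} (hφ : φ ∈ Th) :
    Entails S (Th \ {φ}) φ ↔ clS S Th φ.1 ≤ clS S (Th \ {φ}) φ.1 := by
  have hB : φ.2 ≤ clS S Th φ.1 := (entails_iff hS).mp (entails_of_mem hφ)
  rw [show φ = (φ.1, φ.2) from rfl, entails_iff hS]
  constructor
  · intro h
    set N := clS S (Th \ {φ}) φ.1 with hN
    have hNmod : N ∈ ModS S Th := by
      intro ψ hψ
      by_cases hψφ : ψ = φ
      · subst hψφ
        intro p hp hle
        have hA : ψ.1 ≤ p.2 N := (hS.1 p hp _ _).mp hle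
        have hmod : p.2 N ∈ ModS S (Th \ {ψ}) := model_g hS hp clS_mem_s10
        have hcl : N ≤ p.2 N := sInf_le ⟨hmod, hA⟩
        exact (hS.1 p hp _ _).mpr (h.trans hcl)
      · exact clS_mem_s10 ψ ⟨hψ, hψφ⟩
    exact sInf_le ⟨hNmod, le_clS_s10⟩
  · intro h
    exact hB.trans h

end Aux

/-- characterization of S-bases among S-complete sets. -/
theorem sBase_tfae
    {L Y X : Type*} [CompleteResiduatedLattice L] [Nonempty Y] [Nonempty X]
    (S : Set (OpPair L Y)) (hS : IsParam S) (I : X → Y → L)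
    (Th : Set (FAI L Y)) (hTh : SComplete S Th I) :
    [SBase S Th I,
     ∀ φ ∈ Th, ¬ Entails S (Th \ {φ}) φ,
     ∀ φ ∈ Th, clS S (Th \ {φ}) φ.1 < clS S Th φ.1].TFAE := by
  tfae_have 1 → 2 := by
    rintro ⟨_, hmin⟩ φ hφ hent
    refine hmin (Th \ {φ}) ⟨Set.diff_subset, fun h => (h hφ).2 rfl⟩ ?_
    intro A B
    rw [← hTh A B]
    constructor
    · intro h M hM
      exact h (modS_antitone Set.diff_subset hM)
    · intro h M hM
      have hMTh : M ∈ ModS S Th := by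
        intro ψ hψ
        by_cases hψφ : ψ = φ
        · subst hψφ; exact hent hM ψ rfl
        · exact hM ψ ⟨hψ, hψφ⟩
      exact h hMTh
  tfae_have 2 → 1 := by
    intro h2
    refine ⟨hTh, fun Th' hTh' hcomp => ?_⟩
    obtain ⟨hsub, hne⟩ := hTh'
    obtain ⟨φ, hφ, hφ'⟩ := Set.exists_of_ssubset ⟨hsub, hne⟩
    have h1 : Entails S Th φ := entails_of_mem hφ
    have h2' : Entails S Th' φ := by
      have := (hcomp φ.1 φ.2).mpr ((hTh φ.1 φ.2).mp h1)
      exact this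
    refine h2 φ hφ ?_
    intro M hM
    have hsub2 : Th' ⊆ Th \ {φ} := fun ψ hψ => ⟨hsub hψ, fun he => hφ' (he ▸ hψ)⟩
    exact h2' (modS_antitone hsub2 hM)
  tfae_have 2 ↔ 3 := by
    refine forall₂_congr fun φ hφ => ?_
    rw [key_iff hS hφ, lt_iff_le_not_ge, and_iff_right (clS_mono Set.diff_subset)]
  tfae_finish

end FAIparam
end
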